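/- Coordinatewise Lipschitz bound for the softmax: for every k ≥ 1, every i ∈ {1,…,k}, and all v, w ∈ ℝ^k, |σ_i(v) − σ_i(w)| ≤ max_{1 ≤ j ≤ k} |v_j − w_j|. -/

import Mathlib

noncomputable section

/-- Coordinatewise Lipschitz bound for the softmax: for every `k ≥ 1`, `i ∈ [k]` and
`v, w ∈ ℝᵏ`, `|σᵢ(v) − σᵢ(w)| ≤ max_j |v_j − w_j|`, where
`σᵢ(v) = exp(vᵢ)/∑ⱼ exp(vⱼ)`. -/
theorem softmax_coord_lipschitz (k : ℕ) (hk : 1 ≤ k) (i : Fin k) (v w : Fin k → ℝ) :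
    |Real.exp (v i) / (∑ j, Real.exp (v j)) -
        Real.exp (w i) / (∑ j, Real.exp (w j))| ≤
      Finset.univ.sup' ⟨i, Finset.mem_univ i⟩ (fun j => |v j - w j|) := by
  set M := Finset.univ.sup' ⟨i, Finset.mem_univ i⟩ (fun j => |v j - w j|) with hMdef
  have hM : ∀ j, |v j - w j| ≤ M := fun j => Finset.le_sup' (fun j => |v j - w j|) (Finset.mem_univ j)
  have hM0 : 0 ≤ M := le_trans (abs_nonneg _) (hM i)
  set u : Fin k → ℝ := fun j => v j - w j with hu
  have hu2 : ∀ j j', |u j - u j'| ≤ 2 * M := by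
    intro j j'
    calc |u j - u j'| ≤ |u j| + |u j'| := abs_sub _ _
    _ ≤ M + M := add_le_add (hM j) (hM j')
    _ = 2 * M := by ring
  set f : ℝ → ℝ := fun t => Real.exp (w i + t * u i) / ∑ j, Real.exp (w j + t * u j)
    with hf
  set f' : ℝ → ℝ := fun t =>
    (u i * Real.exp (w i + t * u i) * (∑ j, Real.exp (w j + t * u j)) -
      Real.exp (w i + t * u i) * (∑ j, u j * Real.exp (w j + t * u j))) /
      (∑ j, Real.exp (w j + t * u j)) ^ 2 with hf'
  have hD : ∀ t : ℝ, 0 < ∑ j, Real.exp (w j + t * u j) := fun t =>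
    Finset.sum_pos (fun j _ => Real.exp_pos _) ⟨i, Finset.mem_univ i⟩
  have hderiv : ∀ t : ℝ, HasDerivAt f (f' t) t := by
    intro t
    have haff : ∀ j, HasDerivAt (fun t : ℝ => Real.exp (w j + t * u j))
        (u j * Real.exp (w j + t * u j)) t := by
      intro j
      have h1 : HasDerivAt (fun t : ℝ => w j + t * u j) (u j) t := by
        simpa using ((hasDerivAt_id t).mul_const (u j)).const_add (w j)
      simpa [mul_comm] using h1.exp
    have hDd : HasDerivAt (fun t => ∑ j, Real.exp (w j + t * u j))
        (∑ j, u j * Real.exp (w j + t * u j)) t := HasDerivAt.fun_sum (fun j _ => haff j)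
    exact (haff i).div hDd (ne_of_gt (hD t))
  have hbound : ∀ t : ℝ, ‖f' t‖ ≤ M := by
    intro t
    set E : Fin k → ℝ := fun j => Real.exp (w j + t * u j) with hE
    set D := ∑ j, E j with hDdef
    have hDpos : 0 < D := hD t
    have hEpos : ∀ j, 0 < E j := fun j => Real.exp_pos _
    have hEi : E i ≤ D := Finset.single_le_sum (fun j _ => (hEpos j).le) (Finset.mem_univ i)
    have hnum : u i * E i * D - E i * (∑ j, u j * E j)
        = E i * ∑ j ∈ Finset.univ.erase i, (u i - u j) * E j := by
      rw [Finset.sum_erase _ (by simp)]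
      have hs : (∑ j, (u i - u j) * E j) = u i * D - ∑ j, u j * E j := by
        rw [hDdef, Finset.mul_sum, ← Finset.sum_sub_distrib]
        exact Finset.sum_congr rfl (fun j _ => by ring)
      rw [hs]; ring
    have hsum : |∑ j ∈ Finset.univ.erase i, (u i - u j) * E j| ≤ 2 * M * (D - E i) := by
      calc |∑ j ∈ Finset.univ.erase i, (u i - u j) * E j|
          ≤ ∑ j ∈ Finset.univ.erase i, |(u i - u j) * E j| := Finset.abs_sum_le_sum_abs _ _
        _ ≤ ∑ j ∈ Finset.univ.erase i, 2 * M * E j := by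
            refine Finset.sum_le_sum (fun j _ => ?_)
            rw [abs_mul, abs_of_pos (hEpos j)]
            exact mul_le_mul_of_nonneg_right (hu2 i j) (hEpos j).le
        _ = 2 * M * (D - E i) := by
            rw [← Finset.mul_sum, Finset.sum_erase_eq_sub (Finset.mem_univ i)]
    have : ‖f' t‖ = |u i * E i * D - E i * (∑ j, u j * E j)| / D ^ 2 := by
      rw [hf']
      simp only [Real.norm_eq_abs]
      rw [abs_div, abs_of_pos (by positivity : (0:ℝ) < D ^ 2)]
    rw [this, hnum, div_le_iff₀ (by positivity)]
    calc |E i * ∑ j ∈ Finset.univ.erase i, (u i - u j) * E j|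
        = E i * |∑ j ∈ Finset.univ.erase i, (u i - u j) * E j| := by
          rw [abs_mul, abs_of_pos (hEpos i)]
      _ ≤ E i * (2 * M * (D - E i)) :=
          mul_le_mul_of_nonneg_left hsum (hEpos i).le
      _ ≤ M * D ^ 2 := by nlinarith [sq_nonneg (2 * E i - D), hEpos i, hEi, hM0, hDpos]
  have key := Convex.norm_image_sub_le_of_norm_hasDerivWithin_le
      (fun x _ => (hderiv x).hasDerivWithinAt) (fun x _ => hbound x)
      convex_univ (Set.mem_univ (0:ℝ)) (Set.mem_univ (1:ℝ))
  have h0 : f 0 = Real.exp (w i) / ∑ j, Real.exp (w j) := by simp [hf]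
  have h1 : f 1 = Real.exp (v i) / ∑ j, Real.exp (v j) := by simp [hf, hu]
  simpa [h0, h1, Real.norm_eq_abs] using key
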